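/- arXiv:1406.0088 — 2 statements merged into one kernel-verified Lean document; each statement's English description precedes it below -/
import Mathlib

section
/- Let (E, p) be a 𝒢-sheaf of 𝕜-modules over an ample groupoid 𝒢. Then the set Γ_c(E,p) of continuous compactly supported global sections s : 𝒢⁽⁰⁾ → E, with pointwise addition and the action (s·f)(x) = Σ_{d(g)=x} f(g)·(s(r(g))·g) for f ∈ 𝕜𝒢, is a unitary right 𝕜𝒢-module. -/
open Set

structure TopGroupoid (Γ : Type) [TopologicalSpace Γ] where
  d : Γ → Γ
  r : Γ → Γ
  mul : Γ → Γ → Γ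
  inv : Γ → Γ
  r_d : ∀ g, r (d g) = d g
  d_r : ∀ g, d (r g) = r g
  d_mul : ∀ g h, d g = r h → d (mul g h) = d h
  r_mul : ∀ g h, d g = r h → r (mul g h) = r g
  mul_assoc : ∀ g h k, d g = r h → d h = r k → mul (mul g h) k = mul g (mul h k)
  mul_d : ∀ g, mul g (d g) = g
  r_mul_self : ∀ g, mul (r g) g = g
  d_inv : ∀ g, d (inv g) = r g
  r_inv : ∀ g, r (inv g) = d g
  mul_inv : ∀ g, mul g (inv g) = r g
  inv_mul : ∀ g, mul (inv g) g = d g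
  continuous_d : Continuous d
  continuous_r : Continuous r
  continuous_inv : Continuous inv
  continuous_mul : ContinuousOn (fun p : Γ × Γ => mul p.1 p.2) {p | d p.1 = r p.2}

namespace TopGroupoid

variable {Γ : Type} [TopologicalSpace Γ] (G : TopGroupoid Γ)

/-- The unit space, identified with its image in the arrow space. -/
def units : Set Γ := Set.range G.d

/-- `f` restricted to `U` is a homeomorphism onto its (open) image. -/
def IsPartialHomeoOn (f : Γ → Γ) (U : Set Γ) : Prop :=
  Set.InjOn f U ∧ IsOpen (f '' U) ∧ ∀ V, V ⊆ U → IsOpen V → IsOpen (f '' V)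

/-- A local bisection: an open set on which both `d` and `r` restrict to
homeomorphisms onto their images. -/
def IsBisection (U : Set Γ) : Prop :=
  IsOpen U ∧ IsPartialHomeoOn G.d U ∧ IsPartialHomeoOn G.r U

/-- The groupoid is étale: the domain map is a local homeomorphism. -/
def Etale : Prop := ∀ g : Γ, ∃ U, g ∈ U ∧ IsOpen U ∧ IsPartialHomeoOn G.d U

/-- Setwise product of subsets of the arrow space. -/
def bisMul (U V : Set Γ) : Set Γ :=
  {k | ∃ u ∈ U, ∃ v ∈ V, G.d u = G.r v ∧ k = G.mul u v}

/-- Setwise inverse. -/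
def bisInv (U : Set Γ) : Set Γ := G.inv '' U

/-- Ample: étale, the unit space is Hausdorff and has a basis of compact open sets. -/
def Ample : Prop :=
  G.Etale ∧
    (∀ x y, x ∈ G.units → y ∈ G.units → x ≠ y →
      ∃ U V : Set Γ, IsOpen U ∧ IsOpen V ∧ x ∈ U ∧ y ∈ V ∧ U ∩ V ∩ G.units = ∅) ∧
    ∀ x ∈ G.units, ∀ W : Set Γ, IsOpen W → x ∈ W →
      ∃ K : Set Γ, K ⊆ G.units ∧ x ∈ K ∧ K ⊆ W ∧ IsOpen K ∧ IsCompact K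

/-- Convolution product of `𝕜`-valued functions on the arrow space. -/
noncomputable def conv {𝕜 : Type} [CommRing 𝕜] (f₁ f₂ : Γ → 𝕜) : Γ → 𝕜 :=
  fun g => ∑ᶠ h ∈ {h : Γ | G.d h = G.d g}, f₁ (G.mul g (G.inv h)) * f₂ h

/-- Characteristic function of a set. -/
noncomputable def chi (𝕜 : Type) [CommRing 𝕜] (U : Set Γ) : Γ → 𝕜 :=
  Set.indicator U 1

/-- The groupoid algebra `𝕜𝒢`, as the span of characteristic functions of
compact open local bisections. -/
def grpAlg (𝕜 : Type) [CommRing 𝕜] : Submodule 𝕜 (Γ → 𝕜) :=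
  Submodule.span 𝕜 {f | ∃ U : Set Γ, G.IsBisection U ∧ IsCompact U ∧ f = chi 𝕜 U}

end TopGroupoid
/-- A `𝒢`-sheaf of `𝕜`-modules: a local homeomorphism `p : E → 𝒢⁽⁰⁾` (encoded
via its stalks, with `E = Σ x, stalk x` and `p = Sigma.fst`) together with a
`𝕜`-module structure on each stalk, continuous zero section, addition and scalar
multiplication, and a continuous right `𝒢`-action by `𝕜`-linear maps on stalks. -/
structure GSheafMod {Γ : Type} [TopologicalSpace Γ] (G : TopGroupoid Γ)
    (𝕜 : Type) [CommRing 𝕜] where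
  stalk : Γ → Type
  addCommGroup : ∀ x, AddCommGroup (stalk x)
  module : ∀ x, Module 𝕜 (stalk x)
  topE : TopologicalSpace (Σ x, stalk x)
  trivial_off_units : ∀ x, x ∉ G.units → ∀ e : stalk x,
    e = @OfNat.ofNat _ 0 (@Zero.toOfNat0 _ (by exact (addCommGroup x).toZero))
  continuous_proj : Continuous (Sigma.fst : (Σ x, stalk x) → Γ)
  etale_proj : ∀ e : Σ x, stalk x, ∃ U : Set (Σ x, stalk x), e ∈ U ∧ IsOpen U ∧
    Set.InjOn Sigma.fst U ∧ ∀ V, V ⊆ U → IsOpen V → IsOpen (Sigma.fst '' V)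
  continuous_zero : ContinuousOn
    (fun x => (⟨x, @OfNat.ofNat _ 0 (@Zero.toOfNat0 _ (addCommGroup x).toZero)⟩ :
      Σ x, stalk x)) G.units
  continuous_add : Continuous
    (fun q : {q : (Σ x, stalk x) × (Σ x, stalk x) // q.1.1 = q.2.1} =>
      (⟨q.1.1.1, @HAdd.hAdd _ _ _ (@instHAdd _ (addCommGroup q.1.1.1).toAdd)
        q.1.1.2 (cast (congrArg stalk q.2).symm q.1.2.2)⟩ : Σ x, stalk x))
  continuous_smul : ∀ c : 𝕜, Continuous
    (fun e : Σ x, stalk x =>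
      (⟨e.1, @HSMul.hSMul 𝕜 _ _ (@instHSMul _ _ (module e.1).toSMul) c e.2⟩ :
        Σ x, stalk x))
  act : ∀ g : Γ, stalk (G.r g) → stalk (G.d g)
  act_add : ∀ g a b, act g (@HAdd.hAdd _ _ _
      (@instHAdd _ (addCommGroup (G.r g)).toAdd) a b)
    = @HAdd.hAdd _ _ _ (@instHAdd _ (addCommGroup (G.d g)).toAdd) (act g a) (act g b)
  act_smul : ∀ g (c : 𝕜) a, act g (@HSMul.hSMul 𝕜 _ _
      (@instHSMul _ _ (module (G.r g)).toSMul) c a)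
    = @HSMul.hSMul 𝕜 _ _ (@instHSMul _ _ (module (G.d g)).toSMul) c (act g a)
  act_unit : ∀ x, x ∈ G.units → ∀ a : stalk (G.r x), HEq (act x a) a
  act_comp : ∀ g h (w : G.d g = G.r h) (a : stalk (G.r g)),
    HEq (act h (cast (congrArg stalk w) (act g a)))
      (act (G.mul g h) (cast (congrArg stalk (G.r_mul g h w)).symm a))
  continuous_act : Continuous
    (fun q : {q : (Σ x, stalk x) × Γ // q.1.1 = G.r q.2} =>
      (⟨G.d q.1.2, act q.1.2 (cast (congrArg stalk q.2) q.1.1.2)⟩ : Σ x, stalk x))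

attribute [instance] GSheafMod.addCommGroup GSheafMod.module GSheafMod.topE

namespace GSheafMod

variable {Γ : Type} [TopologicalSpace Γ] {G : TopGroupoid Γ}
  {𝕜 : Type} [CommRing 𝕜] (F : GSheafMod G 𝕜)

/-- Compactly supported continuous global sections. -/
def Γc : Set (∀ x, F.stalk x) :=
  {s | (∀ x, x ∉ G.units → s x = 0) ∧
    ContinuousOn (fun x => (⟨x, s x⟩ : Σ x, F.stalk x)) G.units ∧
    ∃ K : Set Γ, IsCompact K ∧ ∀ x, s x ≠ 0 → x ∈ K}

/-- The right action of a function `f : Γ → 𝕜` on a section: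
`(s·f)(x) = Σ_{d(g)=x} f(g) • (s(r(g))·g)`. -/
noncomputable def actSec (s : ∀ x, F.stalk x) (f : Γ → 𝕜) : ∀ x, F.stalk x :=
  fun x => ∑ᶠ g : {g : Γ // G.d g = x},
    f g.1 • cast (congrArg F.stalk g.2) (F.act g.1 (s (G.r g.1)))

end GSheafMod

namespace TopGroupoid

variable {Γ : Type} [TopologicalSpace Γ] (G : TopGroupoid Γ)

lemma d_idem (g : Γ) : G.d (G.d g) = G.d g := by
  have h := G.d_mul g (G.d g) (G.r_d g).symm
  rw [G.mul_d] at h; exact h.symm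

lemma d_mem_units (g : Γ) : G.d g ∈ G.units := ⟨g, rfl⟩

lemma r_mem_units (g : Γ) : G.r g ∈ G.units := ⟨G.inv g, G.d_inv g⟩

lemma d_eq_self {x : Γ} (hx : x ∈ G.units) : G.d x = x := by
  obtain ⟨g, rfl⟩ := hx; exact G.d_idem g

lemma r_eq_self {x : Γ} (hx : x ∈ G.units) : G.r x = x := by
  obtain ⟨g, rfl⟩ := hx; exact G.r_d g

lemma units_isOpen (hE : G.Etale) : IsOpen G.units := by
  rw [isOpen_iff_forall_mem_open]
  intro x hx
  obtain ⟨U, hxU, _, _, hUo, _⟩ := hE x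
  exact ⟨G.d '' U, fun y ⟨g, _, hg⟩ => hg ▸ G.d_mem_units g, hUo,
    ⟨x, hxU, G.d_eq_self hx⟩⟩

/-- Compact subsets of the unit space can be separated from outside unit points. -/
lemma compact_separated (hG : G.Ample) {K : Set Γ} (hK : IsCompact K)
    (hKu : K ⊆ G.units) {x : Γ} (hx : x ∈ G.units) (hxK : x ∉ K) :
    ∃ V : Set Γ, IsOpen V ∧ x ∈ V ∧ V ∩ K = ∅ := by
  have sep : ∀ y : Γ, y ∈ K → ∃ UV : Set Γ × Set Γ, IsOpen UV.1 ∧ IsOpen UV.2 ∧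
      y ∈ UV.1 ∧ x ∈ UV.2 ∧ UV.1 ∩ UV.2 ∩ G.units = ∅ := by
    intro y hy
    obtain ⟨U, V, hU, hV, hyU, hxV, hUV⟩ :=
      hG.2.1 y x (hKu hy) hx (fun h => hxK (h ▸ hy))
    exact ⟨(U, V), hU, hV, hyU, hxV, hUV⟩
  choose UV hU hV hyU hxV hUV using sep
  obtain ⟨t, ht⟩ := hK.elim_finite_subcover
    (fun y : K => (UV y.1 y.2).1) (fun y => hU y.1 y.2)
    (fun y hy => Set.mem_iUnion.2 ⟨⟨y, hy⟩, hyU y hy⟩)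
  refine ⟨⋂ y ∈ t, (UV y.1 y.2).2, isOpen_biInter_finset (fun y _ => hV y.1 y.2),
    Set.mem_biInter (fun y _ => hxV y.1 y.2), ?_⟩
  rw [Set.eq_empty_iff_forall_notMem]
  rintro z ⟨hz1, hz2⟩
  obtain ⟨y, hyt, hzU⟩ := Set.mem_iUnion₂.1 (ht hz2)
  have hzV : z ∈ (UV y.1 y.2).2 := Set.mem_iInter₂.1 hz1 y hyt
  have : z ∈ (UV y.1 y.2).1 ∩ (UV y.1 y.2).2 ∩ G.units := ⟨⟨hzU, hzV⟩, hKu hz2⟩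
  rw [hUV y.1 y.2] at this
  exact this

/-- The inverse of a partial homeomorphism is continuous on the image. -/
lemma partialHomeo_inv_continuousOn [Nonempty Γ] {f : Γ → Γ} {U : Set Γ}
    (hUo : IsOpen U) (h : IsPartialHomeoOn f U) :
    ContinuousOn (Function.invFunOn f U) (f '' U) := by
  obtain ⟨hinj, himg, hopen⟩ := h
  rw [continuousOn_open_iff himg]
  intro t ht
  have : f '' U ∩ Function.invFunOn f U ⁻¹' t = f '' (U ∩ t) := by
    ext z
    constructor
    · rintro ⟨⟨g, hgU, rfl⟩, hz⟩
      have h1 : Function.invFunOn f U (f g) = g := hinj.leftInvOn_invFunOn hgU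
      exact ⟨g, ⟨hgU, by rw [Set.mem_preimage, h1] at hz; exact hz⟩, rfl⟩
    · rintro ⟨g, ⟨hgU, hgt⟩, rfl⟩
      have h1 : Function.invFunOn f U (f g) = g := hinj.leftInvOn_invFunOn hgU
      exact ⟨⟨g, hgU, rfl⟩, by rw [Set.mem_preimage, h1]; exact hgt⟩
  rw [this]
  exact hopen _ Set.inter_subset_left (hUo.inter ht)

end TopGroupoid
namespace GSheafMod

variable {Γ : Type} [TopologicalSpace Γ] {G : TopGroupoid Γ}
  {𝕜 : Type} [CommRing 𝕜] (F : GSheafMod G 𝕜)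

/-- Transport along equality of base points. -/
def tr {a b : Γ} (e : a = b) : F.stalk a → F.stalk b :=
  fun v => cast (congrArg F.stalk e) v

@[simp] lemma tr_rfl {a : Γ} (v : F.stalk a) : F.tr rfl v = v := rfl

lemma tr_add {a b : Γ} (e : a = b) (v w : F.stalk a) :
    F.tr e (v + w) = F.tr e v + F.tr e w := by subst e; rfl

lemma tr_smul {a b : Γ} (e : a = b) (c : 𝕜) (v : F.stalk a) :
    F.tr e (c • v) = c • F.tr e v := by subst e; rfl

lemma tr_zero {a b : Γ} (e : a = b) : F.tr e (0 : F.stalk a) = 0 := by subst e; rfl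

lemma tr_tr {a b c : Γ} (e : a = b) (e' : b = c) (v : F.stalk a) :
    F.tr e' (F.tr e v) = F.tr (e.trans e') v := by subst e; subst e'; rfl

lemma tr_eq_iff_heq {a b : Γ} (e : a = b) (v : F.stalk a) (w : F.stalk b) :
    F.tr e v = w ↔ HEq v w := by subst e; simp [tr]

lemma apply_tr {a b : Γ} (e : a = b) (s : ∀ x, F.stalk x) : F.tr e (s a) = s b := by
  subst e; rfl

lemma tr_sum {a b : Γ} (e : a = b) {ι : Type*} (T : Finset ι) (v : ι → F.stalk a) :
    F.tr e (∑ i ∈ T, v i) = ∑ i ∈ T, F.tr e (v i) := by subst e; simp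

lemma act_zero (g : Γ) : F.act g (0 : F.stalk (G.r g)) = 0 := by
  have h := F.act_add g 0 0
  rw [add_zero] at h
  exact left_eq_add.1 h

lemma act_sum (g : Γ) {ι : Type*} (T : Finset ι) (v : ι → F.stalk (G.r g)) :
    F.act g (∑ i ∈ T, v i) = ∑ i ∈ T, F.act g (v i) := by
  classical
  induction T using Finset.induction with
  | empty => simpa using F.act_zero g
  | insert a T h ih =>
                   rw [Finset.sum_insert h, Finset.sum_insert h, F.act_add, ih]

/-- Every stalk over a non-unit is trivial. -/
lemma eq_zero_off_units {x : Γ} (hx : x ∉ G.units) (v : F.stalk x) : v = 0 :=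
  F.trivial_off_units x hx v

/-- `act` by a unit is the identity (in transported form). -/
lemma act_unit' {x : Γ} (hx : x ∈ G.units) (s : ∀ y, F.stalk y) :
    F.tr (G.d_eq_self hx) (F.act x (s (G.r x))) = s x := by
  rw [tr_eq_iff_heq]
  refine HEq.trans (F.act_unit x hx (s (G.r x))) ?_
  rw [G.r_eq_self hx]

/-- Composition law for `act` in transported form. -/
lemma act_comp' (g h : Γ) (w : G.d g = G.r h) (a : F.stalk (G.r g)) :
    F.act h (F.tr w (F.act g a)) =
      F.tr (G.d_mul g h w) (F.act (G.mul g h) (F.tr (G.r_mul g h w).symm a)) := by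
  have hc := F.act_comp g h w a
  rw [eq_comm, tr_eq_iff_heq]
  exact HEq.symm hc

open Classical in
/-- Nondependent version of the summand of `actSec`. -/
noncomputable def Wf (s : ∀ y, F.stalk y) (x : Γ) (k : Γ) : F.stalk x :=
  if e : G.d k = x then F.tr e (F.act k (s (G.r k))) else 0

lemma Wf_of_fiber (s : ∀ y, F.stalk y) {x k : Γ} (e : G.d k = x) :
    F.Wf s x k = F.tr e (F.act k (s (G.r k))) := by rw [Wf]; exact dif_pos e

lemma Wf_of_nfiber (s : ∀ y, F.stalk y) {x k : Γ} (e : G.d k ≠ x) :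
    F.Wf s x k = 0 := by rw [Wf]; exact dif_neg e

lemma actSec_eq (s : ∀ y, F.stalk y) (f : Γ → 𝕜) (x : Γ) :
    F.actSec s f x = ∑ᶠ k : Γ, f k • F.Wf s x k := by
  have h1 : F.actSec s f x = ∑ᶠ g : {g : Γ // G.d g = x}, f g.1 • F.Wf s x g.1 := by
    refine finsum_congr fun g => ?_
    rw [F.Wf_of_fiber s g.2]; rfl
  rw [h1]
  refine Eq.trans (finsum_set_coe_eq_finsum_mem (f := fun k => f k • F.Wf s x k)
    {g : Γ | G.d g = x}) ?_
  rw [finsum_mem_def, Set.indicator_eq_self.2]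
  intro k hk
  rw [Function.mem_support] at hk
  by_contra hknot
  exact hk (by rw [F.Wf_of_nfiber s hknot, smul_zero])

end GSheafMod
namespace TopGroupoid

variable {Γ : Type} [TopologicalSpace Γ] (G : TopGroupoid Γ) {𝕜 : Type} [CommRing 𝕜]

/-- Finiteness of `d`-fibers of the support. -/
def FibFin (f : Γ → 𝕜) : Prop := ∀ x : Γ, {g : Γ | G.d g = x ∧ f g ≠ 0}.Finite

variable {G}

lemma FibFin.add {f₁ f₂ : Γ → 𝕜} (h₁ : G.FibFin f₁) (h₂ : G.FibFin f₂) :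
    G.FibFin (f₁ + f₂) := by
  intro x
  refine ((h₁ x).union (h₂ x)).subset ?_
  rintro g ⟨hg, hne⟩
  by_cases h : f₁ g = 0
  · exact Or.inr ⟨hg, fun h2 => hne (by simp [Pi.add_apply, h, h2])⟩
  · exact Or.inl ⟨hg, h⟩

lemma FibFin.smul {f : Γ → 𝕜} (h : G.FibFin f) (c : 𝕜) : G.FibFin (c • f) := by
  intro x
  refine (h x).subset ?_
  rintro g ⟨hg, hne⟩
  exact ⟨hg, fun h2 => hne (by simp [Pi.smul_apply, h2])⟩

lemma FibFin.zero : G.FibFin (0 : Γ → 𝕜) := by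
  intro x
  convert Set.finite_empty using 2
  simp

lemma fibFin_chi {U : Set Γ} (hU : G.IsBisection U) : G.FibFin (chi 𝕜 U) := by
  intro x
  have : {g : Γ | G.d g = x ∧ chi 𝕜 U g ≠ 0}.Subsingleton := by
    rintro g ⟨hg, hgne⟩ g' ⟨hg', hgne'⟩
    have hgU : g ∈ U := by
      by_contra h; exact hgne (Set.indicator_of_notMem h 1)
    have hgU' : g' ∈ U := by
      by_contra h; exact hgne' (Set.indicator_of_notMem h 1)
    exact hU.2.1.1 hgU hgU' (hg.trans hg'.symm)
  exact this.finite

lemma FibFin.sum {ι : Type*} (T : Finset ι) (h : ι → Γ → 𝕜)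
    (hh : ∀ i ∈ T, G.FibFin (h i)) : G.FibFin (∑ i ∈ T, h i) := by
  classical
  induction T using Finset.induction with
  | empty => simpa using FibFin.zero
  | insert a T hni ih =>
      rw [Finset.sum_insert hni]
      exact (hh a (Finset.mem_insert_self a T)).add
        (ih fun i hi => hh i (Finset.mem_insert_of_mem hi))

/-- Representation of elements of the groupoid algebra. -/
lemma grpAlg_rep {f : Γ → 𝕜} (hf : f ∈ G.grpAlg 𝕜) :
    ∃ (n : ℕ) (c : Fin n → 𝕜) (U : Fin n → Set Γ),
      (∀ i, G.IsBisection (U i)) ∧ (∀ i, IsCompact (U i)) ∧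
      f = ∑ i, c i • chi 𝕜 (U i) := by
  rw [grpAlg, Submodule.mem_span_set'] at hf
  obtain ⟨n, c, g, hsum⟩ := hf
  have hU : ∀ i : Fin n, ∃ U : Set Γ, G.IsBisection U ∧ IsCompact U ∧
      (g i : Γ → 𝕜) = chi 𝕜 U := fun i => (g i).2
  choose U hbis hcpt hchi using hU
  refine ⟨n, c, U, hbis, hcpt, ?_⟩
  rw [← hsum]
  exact (Finset.sum_congr rfl (fun i _ => by rw [hchi i])).symm

lemma grpAlg_fibFin {f : Γ → 𝕜} (hf : f ∈ G.grpAlg 𝕜) : G.FibFin f := by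
  obtain ⟨n, c, U, hbis, _, rfl⟩ := grpAlg_rep hf
  exact FibFin.sum _ _ fun i _ => (fibFin_chi (hbis i)).smul (c i)

/-- A compact superset of the support of elements of the groupoid algebra. -/
lemma grpAlg_support {f : Γ → 𝕜} (hf : f ∈ G.grpAlg 𝕜) :
    ∃ K : Set Γ, IsCompact K ∧ ∀ g, f g ≠ 0 → g ∈ K := by
  obtain ⟨n, c, U, _, hcpt, rfl⟩ := grpAlg_rep hf
  refine ⟨⋃ i, U i, isCompact_iUnion hcpt, fun g hg => ?_⟩
  rw [Finset.sum_apply] at hg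
  obtain ⟨i, _, hi⟩ := Finset.exists_ne_zero_of_sum_ne_zero hg
  rw [Pi.smul_apply] at hi
  have : chi 𝕜 (U i) g ≠ 0 := fun h => hi (by rw [h, smul_zero])
  have hgU : g ∈ U i := by
    by_contra h; exact this (Set.indicator_of_notMem h 1)
  exact Set.mem_iUnion.2 ⟨i, hgU⟩

end TopGroupoid
namespace GSheafMod

open TopGroupoid

variable {Γ : Type} [TopologicalSpace Γ] {G : TopGroupoid Γ}
  {𝕜 : Type} [CommRing 𝕜] (F : GSheafMod G 𝕜)

lemma support_term_subset (s : ∀ y, F.stalk y) (f : Γ → 𝕜) (x : Γ) :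
    Function.support (fun k => f k • F.Wf s x k) ⊆ {g : Γ | G.d g = x ∧ f g ≠ 0} := by
  intro k hk
  rw [Function.mem_support] at hk
  refine ⟨?_, fun h => hk (by rw [h, zero_smul])⟩
  by_contra h
  exact hk (by rw [F.Wf_of_nfiber s h, smul_zero])

lemma Wf_add (s t : ∀ y, F.stalk y) (x k : Γ) :
    F.Wf (s + t) x k = F.Wf s x k + F.Wf t x k := by
  by_cases e : G.d k = x
  · rw [F.Wf_of_fiber _ e, F.Wf_of_fiber _ e, F.Wf_of_fiber _ e, Pi.add_apply,
      F.act_add, F.tr_add]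
  · rw [F.Wf_of_nfiber _ e, F.Wf_of_nfiber _ e, F.Wf_of_nfiber _ e, add_zero]

lemma Wf_smul (c : 𝕜) (s : ∀ y, F.stalk y) (x k : Γ) :
    F.Wf (c • s) x k = c • F.Wf s x k := by
  by_cases e : G.d k = x
  · rw [F.Wf_of_fiber _ e, F.Wf_of_fiber _ e, Pi.smul_apply, F.act_smul, F.tr_smul]
  · rw [F.Wf_of_nfiber _ e, F.Wf_of_nfiber _ e, smul_zero]

lemma actSec_add_right {f : Γ → 𝕜} (hf : G.FibFin f) (s t : ∀ y, F.stalk y) :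
    F.actSec (s + t) f = F.actSec s f + F.actSec t f := by
  funext x
  rw [Pi.add_apply, F.actSec_eq, F.actSec_eq, F.actSec_eq, ← finsum_add_distrib
    ((hf x).subset (F.support_term_subset s f x))
    ((hf x).subset (F.support_term_subset t f x))]
  exact finsum_congr fun k => by rw [F.Wf_add, smul_add]

lemma support_term_subset' {f : Γ → 𝕜} (hf : G.FibFin f) (s : ∀ y, F.stalk y) (x : Γ) :
    Function.support (fun k => f k • F.Wf s x k) ⊆ ((hf x).toFinset : Set Γ) :=
  (F.support_term_subset s f x).trans (by rw [Set.Finite.coe_toFinset])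

lemma actSec_smul_right {f : Γ → 𝕜} (hf : G.FibFin f) (c : 𝕜) (s : ∀ y, F.stalk y) :
    F.actSec (c • s) f = c • F.actSec s f := by
  classical
  funext x
  rw [Pi.smul_apply, F.actSec_eq, F.actSec_eq,
    finsum_eq_finset_sum_of_support_subset _ (F.support_term_subset' hf (c • s) x),
    finsum_eq_finset_sum_of_support_subset _ (F.support_term_subset' hf s x),
    Finset.smul_sum]
  exact Finset.sum_congr rfl fun k _ => by rw [F.Wf_smul, smul_comm]

lemma actSec_add_left {f₁ f₂ : Γ → 𝕜} (h₁ : G.FibFin f₁) (h₂ : G.FibFin f₂)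
    (s : ∀ y, F.stalk y) :
    F.actSec s (f₁ + f₂) = F.actSec s f₁ + F.actSec s f₂ := by
  funext x
  rw [Pi.add_apply, F.actSec_eq, F.actSec_eq, F.actSec_eq, ← finsum_add_distrib
    ((h₁ x).subset (F.support_term_subset s f₁ x))
    ((h₂ x).subset (F.support_term_subset s f₂ x))]
  exact finsum_congr fun k => by rw [Pi.add_apply, add_smul]

lemma actSec_smul_left {f : Γ → 𝕜} (hf : G.FibFin f) (c : 𝕜) (s : ∀ y, F.stalk y) :
    F.actSec s (c • f) = c • F.actSec s f := by
  classical
  funext x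
  have hsub : Function.support (fun k => (c • f) k • F.Wf s x k) ⊆
      ((hf x).toFinset : Set Γ) := by
    refine (F.support_term_subset s (c • f) x).trans ?_
    rw [Set.Finite.coe_toFinset]
    rintro g ⟨hg, hne⟩
    exact ⟨hg, fun h => hne (by rw [Pi.smul_apply, h, smul_zero])⟩
  rw [Pi.smul_apply, F.actSec_eq, F.actSec_eq,
    finsum_eq_finset_sum_of_support_subset _ hsub,
    finsum_eq_finset_sum_of_support_subset _ (F.support_term_subset' hf s x),
    Finset.smul_sum]
  exact Finset.sum_congr rfl fun k _ => by
    rw [Pi.smul_apply, smul_eq_mul, mul_smul]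

lemma actSec_zero_left (s : ∀ y, F.stalk y) : F.actSec s (0 : Γ → 𝕜) = 0 := by
  funext x
  rw [F.actSec_eq]
  refine Eq.trans (finsum_congr fun k => ?_) finsum_zero
  rw [Pi.zero_apply, zero_smul]

lemma actSec_sum_left {ι : Type*} (T : Finset ι) (h : ι → Γ → 𝕜)
    (hh : ∀ i ∈ T, G.FibFin (h i)) (s : ∀ y, F.stalk y) :
    F.actSec s (∑ i ∈ T, h i) = ∑ i ∈ T, F.actSec s (h i) := by
  classical
  induction T using Finset.induction with
  | empty => simpa using F.actSec_zero_left s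
  | insert a T hni ih =>
      rw [Finset.sum_insert hni, Finset.sum_insert hni,
        F.actSec_add_left (hh a (Finset.mem_insert_self a T))
          (FibFin.sum T h fun i hi => hh i (Finset.mem_insert_of_mem hi)),
        ih fun i hi => hh i (Finset.mem_insert_of_mem hi)]

end GSheafMod
namespace GSheafMod

open TopGroupoid

variable {Γ : Type} [TopologicalSpace Γ] {G : TopGroupoid Γ}
  {𝕜 : Type} [CommRing 𝕜] (F : GSheafMod G 𝕜)

lemma chi_of_not_mem {U : Set Γ} {k : Γ} (h : k ∉ U) : chi 𝕜 U k = 0 := by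
  rw [TopGroupoid.chi]; exact Set.indicator_of_notMem h 1

lemma chi_ne_zero_mem {U : Set Γ} {k : Γ} (h : chi 𝕜 U k ≠ 0) : k ∈ U := by
  by_contra hk; exact h (chi_of_not_mem hk)

lemma chi_of_mem {U : Set Γ} {k : Γ} (h : k ∈ U) : chi 𝕜 U k = 1 := by
  rw [TopGroupoid.chi, Set.indicator_of_mem h, Pi.one_apply]

lemma actSec_chi_eq_zero (s : ∀ y, F.stalk y) {U : Set Γ} {x : Γ}
    (hx : x ∉ G.d '' U) : F.actSec s (chi 𝕜 U) x = 0 := by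
  rw [F.actSec_eq]
  refine Eq.trans (finsum_congr fun k => ?_) finsum_zero
  by_cases hk : k ∈ U
  · have : G.d k ≠ x := fun e => hx ⟨k, hk, e⟩
    simp only [F.Wf_of_nfiber s this, smul_zero]
  · simp only [chi_of_not_mem hk, zero_smul]

lemma actSec_chi_of_mem (s : ∀ y, F.stalk y) {U : Set Γ}
    (hinj : Set.InjOn G.d U) {g : Γ} (hg : g ∈ U) :
    F.actSec s (chi 𝕜 U) (G.d g) = F.act g (s (G.r g)) := by
  rw [F.actSec_eq]
  have h := finsum_eq_single (fun k => chi 𝕜 U k • F.Wf s (G.d g) k) g ?_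
  · rw [h, chi_of_mem hg, F.Wf_of_fiber s rfl, F.tr_rfl, one_smul]
  · intro k hk
    by_cases hkU : k ∈ U
    · have : G.d k ≠ G.d g := fun e => hk (hinj hkU hg e)
      simp only [F.Wf_of_nfiber s this, smul_zero]
    · simp only [chi_of_not_mem hkU, zero_smul]

lemma actSec_chi_unit_mem (s : ∀ y, F.stalk y) {U : Set Γ}
    (hU : U ⊆ G.units) {x : Γ} (hx : x ∈ U) :
    F.actSec s (chi 𝕜 U) x = s x := by
  rw [F.actSec_eq]
  have h := finsum_eq_single (fun k => chi 𝕜 U k • F.Wf s x k) x ?_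
  · rw [h, chi_of_mem hx, F.Wf_of_fiber s (G.d_eq_self (hU hx)),
      F.act_unit' (hU hx), one_smul]
  · intro k hk
    by_cases hkU : k ∈ U
    · have : G.d k ≠ x := fun e => hk ((G.d_eq_self (hU hkU)).symm.trans e)
      simp only [F.Wf_of_nfiber s this, smul_zero]
    · simp only [chi_of_not_mem hkU, zero_smul]

lemma actSec_chi_unit_not_mem (s : ∀ y, F.stalk y) {U : Set Γ}
    (hU : U ⊆ G.units) {x : Γ} (hxU : x ∉ U) :
    F.actSec s (chi 𝕜 U) x = 0 := by
  rw [F.actSec_eq]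
  refine Eq.trans (finsum_congr fun k => ?_) finsum_zero
  by_cases hkU : k ∈ U
  · have : G.d k ≠ x := fun e => hxU (((G.d_eq_self (hU hkU)).symm.trans e) ▸ hkU)
    simp only [F.Wf_of_nfiber s this, smul_zero]
  · simp only [chi_of_not_mem hkU, zero_smul]

lemma Γc_zero : (0 : ∀ x, F.stalk x) ∈ F.Γc := by
  refine ⟨fun x _ => rfl, ?_, ∅, isCompact_empty, fun x hx => absurd rfl hx⟩
  exact F.continuous_zero

lemma Γc_add {s t : ∀ x, F.stalk x} (hs : s ∈ F.Γc) (ht : t ∈ F.Γc) :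
    s + t ∈ F.Γc := by
  obtain ⟨-, hsc, Ks, hKs, hKs'⟩ := hs
  obtain ⟨-, htc, Kt, hKt, hKt'⟩ := ht
  refine ⟨fun x hx => F.eq_zero_off_units hx _, ?_, Ks ∪ Kt, hKs.union hKt, ?_⟩
  · have hpair : ContinuousOn (fun x =>
        (⟨(⟨x, s x⟩, ⟨x, t x⟩), rfl⟩ :
          {q : (Σ y, F.stalk y) × (Σ y, F.stalk y) // q.1.1 = q.2.1})) G.units := by
      rw [Topology.IsEmbedding.subtypeVal.isInducing.continuousOn_iff]
      exact hsc.prodMk htc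
    exact F.continuous_add.comp_continuousOn hpair
  · intro x hx
    rcases (by
      by_contra hc
      push_neg at hc
      exact hx (by rw [Pi.add_apply, hc.1, hc.2, add_zero]) :
      s x ≠ 0 ∨ t x ≠ 0) with h | h
    · exact Or.inl (hKs' x h)
    · exact Or.inr (hKt' x h)

lemma Γc_smul (c : 𝕜) {s : ∀ x, F.stalk x} (hs : s ∈ F.Γc) : c • s ∈ F.Γc := by
  obtain ⟨-, hsc, Ks, hKs, hKs'⟩ := hs
  refine ⟨fun x hx => F.eq_zero_off_units hx _, ?_, Ks, hKs, ?_⟩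
  · exact (F.continuous_smul c).comp_continuousOn hsc
  · intro x hx
    refine hKs' x fun h => hx ?_
    rw [Pi.smul_apply, h, smul_zero]

lemma Γc_sum {ι : Type*} (T : Finset ι) (v : ι → ∀ x, F.stalk x)
    (hv : ∀ i ∈ T, v i ∈ F.Γc) : (∑ i ∈ T, v i) ∈ F.Γc := by
  classical
  induction T using Finset.induction with
  | empty => simpa using F.Γc_zero
  | insert a T hni ih =>
      rw [Finset.sum_insert hni]
      exact F.Γc_add (hv a (Finset.mem_insert_self a T))
        (ih fun i hi => hv i (Finset.mem_insert_of_mem hi))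

end GSheafMod
namespace GSheafMod

open TopGroupoid

variable {Γ : Type} [TopologicalSpace Γ] {G : TopGroupoid Γ}
  {𝕜 : Type} [CommRing 𝕜] (F : GSheafMod G 𝕜)

lemma Γc_actSec_chi (hG : G.Ample) {s : ∀ x, F.stalk x} (hs : s ∈ F.Γc)
    {U : Set Γ} (hb : G.IsBisection U) (hc : IsCompact U) :
    F.actSec s (chi 𝕜 U) ∈ F.Γc := by
  obtain ⟨-, hsc, -, -, -⟩ := hs
  set D : Set Γ := G.d '' U with hD
  have hDo : IsOpen D := hb.2.1.2.1
  have hDc : IsCompact D := hc.image G.continuous_d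
  have hDu : D ⊆ G.units := by rintro y ⟨g, -, rfl⟩; exact G.d_mem_units g
  refine ⟨fun x hx => F.eq_zero_off_units hx _, ?_, D, hDc, ?_⟩
  · -- continuity on units
    intro x hx
    by_cases hxD : x ∈ D
    · haveI : Nonempty Γ := ⟨x⟩
      set σ := Function.invFunOn G.d U with hσdef
      have hσmem : ∀ y ∈ D, σ y ∈ U := by
        rintro y ⟨g, hg, rfl⟩; exact Function.invFunOn_mem ⟨g, hg, rfl⟩
      have hσd : ∀ y ∈ D, G.d (σ y) = y := by
        rintro y ⟨g, hg, rfl⟩; exact Function.invFunOn_eq ⟨g, hg, rfl⟩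
      have hσc : ContinuousOn σ D := partialHomeo_inv_continuousOn hb.1 hb.2.1
      -- the composition through the action
      have hrσ : ContinuousOn (fun y => G.r (σ y)) D :=
        G.continuous_r.comp_continuousOn hσc
      have hsrσ : ContinuousOn (fun y => (⟨G.r (σ y), s (G.r (σ y))⟩ :
          Σ z, F.stalk z)) D :=
        hsc.comp hrσ (fun y _ => G.r_mem_units (σ y))
      have hpair : ContinuousOn (fun y =>
          (⟨(⟨G.r (σ y), s (G.r (σ y))⟩, σ y), rfl⟩ :
            {q : (Σ z, F.stalk z) × Γ // q.1.1 = G.r q.2})) D := by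
        rw [Topology.IsEmbedding.subtypeVal.isInducing.continuousOn_iff]
        exact hsrσ.prodMk hσc
      have hΨ : ContinuousOn (fun y => (⟨G.d (σ y),
          F.act (σ y) (s (G.r (σ y)))⟩ : Σ z, F.stalk z)) D :=
        F.continuous_act.comp_continuousOn hpair
      have heq : Set.EqOn (fun y => (⟨y, F.actSec s (chi 𝕜 U) y⟩ : Σ z, F.stalk z))
          (fun y => (⟨G.d (σ y), F.act (σ y) (s (G.r (σ y)))⟩ : Σ z, F.stalk z)) D := by
        intro y hy
        have h1 : F.actSec s (chi 𝕜 U) (G.d (σ y)) = F.act (σ y) (s (G.r (σ y))) :=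
          F.actSec_chi_of_mem s hb.2.1.1 (hσmem y hy)
        have h2 : (⟨y, F.actSec s (chi 𝕜 U) y⟩ : Σ z, F.stalk z) =
            ⟨G.d (σ y), F.actSec s (chi 𝕜 U) (G.d (σ y))⟩ := by rw [hσd y hy]
        show (⟨y, F.actSec s (chi 𝕜 U) y⟩ : Σ z, F.stalk z) =
          ⟨G.d (σ y), F.act (σ y) (s (G.r (σ y)))⟩
        rw [h2, h1]
      have hcw : ContinuousWithinAt (fun y => (⟨y, F.actSec s (chi 𝕜 U) y⟩ :
          Σ z, F.stalk z)) D x := (hΨ.congr heq) x hxD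
      exact (continuousWithinAt_inter (hDo.mem_nhds hxD)).1
        (hcw.mono Set.inter_subset_right)
    · obtain ⟨V, hVo, hxV, hVD⟩ := G.compact_separated hG hDc hDu hx hxD
      have heq : Set.EqOn (fun y => (⟨y, F.actSec s (chi 𝕜 U) y⟩ : Σ z, F.stalk z))
          (fun y => (⟨y, (0 : F.stalk y)⟩ : Σ z, F.stalk z)) (G.units ∩ V) := by
        intro y ⟨hyu, hyV⟩
        have hyD : y ∉ D := fun h =>
          (Set.eq_empty_iff_forall_notMem.1 hVD y) ⟨hyV, h⟩
        show (⟨y, F.actSec s (chi 𝕜 U) y⟩ : Σ z, F.stalk z) = ⟨y, (0 : F.stalk y)⟩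
        rw [F.actSec_chi_eq_zero s hyD]
      have hcz : ContinuousWithinAt (fun y => (⟨y, (0 : F.stalk y)⟩ :
          Σ z, F.stalk z)) (G.units ∩ V) x :=
        (F.continuous_zero x hx).mono Set.inter_subset_left
      have hcw : ContinuousWithinAt (fun y => (⟨y, F.actSec s (chi 𝕜 U) y⟩ :
          Σ z, F.stalk z)) (G.units ∩ V) x :=
        hcz.congr heq (by rw [F.actSec_chi_eq_zero s hxD])
      exact (continuousWithinAt_inter (hVo.mem_nhds hxV)).1 hcw
  · -- compact support
    intro x hx
    by_contra hxD
    exact hx (F.actSec_chi_eq_zero s hxD)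

end GSheafMod
namespace GSheafMod

open TopGroupoid

variable {Γ : Type} [TopologicalSpace Γ] {G : TopGroupoid Γ}
  {𝕜 : Type} [CommRing 𝕜] (F : GSheafMod G 𝕜)

lemma actSec_conv {f₁ f₂ : Γ → 𝕜} (h₁ : G.FibFin f₁) (h₂ : G.FibFin f₂)
    (s : ∀ y, F.stalk y) :
    F.actSec (F.actSec s f₁) f₂ = F.actSec s (G.conv f₁ f₂) := by
  classical
  funext x
  set T₂ : Finset Γ := (h₂ x).toFinset with hT₂
  set T₁ : Γ → Finset Γ := fun h => (h₁ (G.r h)).toFinset with hT₁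
  set T₃ : Finset Γ := T₂.biUnion (fun h => (T₁ h).image (fun g => G.mul g h)) with hT₃
  have memT₂ : ∀ {h}, h ∈ T₂ ↔ (G.d h = x ∧ f₂ h ≠ 0) := fun {h} => (h₂ x).mem_toFinset
  have memT₁ : ∀ {h g}, g ∈ T₁ h ↔ (G.d g = G.r h ∧ f₁ g ≠ 0) :=
    fun {h g} => (h₁ (G.r h)).mem_toFinset
  -- groupoid facts
  have fact1 : ∀ h, G.d h = x → ∀ k, G.d k = x →
      G.d (G.mul k (G.inv h)) = G.r h ∧ G.mul (G.mul k (G.inv h)) h = k := by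
    intro h eh k ek
    have w : G.d k = G.r (G.inv h) := by rw [G.r_inv, eh, ek]
    have w2 : G.d (G.inv h) = G.r h := G.d_inv h
    constructor
    · rw [G.d_mul k (G.inv h) w, w2]
    · rw [G.mul_assoc k (G.inv h) h w w2, G.inv_mul, eh, ← ek, G.mul_d]
  have fact2 : ∀ h, G.d h = x → ∀ g, G.d g = G.r h →
      G.d (G.mul g h) = x ∧ G.mul (G.mul g h) (G.inv h) = g := by
    intro h eh g eg
    constructor
    · rw [G.d_mul g h eg, eh]
    · rw [G.mul_assoc g h (G.inv h) eg (G.r_inv h).symm, G.mul_inv, ← eg, G.mul_d]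
  have memT₃ : ∀ {k}, k ∈ T₃ → G.d k = x := by
    intro k hk
    obtain ⟨h, hh, hk⟩ := Finset.mem_biUnion.1 hk
    obtain ⟨g, hg, rfl⟩ := Finset.mem_image.1 hk
    exact (fact2 h (memT₂.1 hh).1 g (memT₁.1 hg).1).1
  -- LHS
  have LHS : F.actSec (F.actSec s f₁) f₂ x =
      ∑ h ∈ T₂, ∑ g ∈ T₁ h, (f₁ g * f₂ h) • F.Wf s x (G.mul g h) := by
    rw [F.actSec_eq, finsum_eq_finset_sum_of_support_subset _
      (F.support_term_subset' h₂ (F.actSec s f₁) x)]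
    refine Finset.sum_congr rfl fun h hh => ?_
    obtain ⟨eh, hf2⟩ := memT₂.1 hh
    rw [F.Wf_of_fiber _ eh, F.actSec_eq s f₁ (G.r h),
      finsum_eq_finset_sum_of_support_subset _ (F.support_term_subset' h₁ s (G.r h)),
      F.act_sum, F.tr_sum, Finset.smul_sum]
    refine Finset.sum_congr rfl fun g hg => ?_
    obtain ⟨eg, hf1⟩ := memT₁.1 hg
    rw [F.Wf_of_fiber s eg, F.act_smul, F.tr_smul, F.act_comp' g h eg,
      F.apply_tr (G.r_mul g h eg).symm s, F.tr_tr,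
      ← F.Wf_of_fiber s ((G.d_mul g h eg).trans eh), smul_smul,
      mul_comm (f₂ h) (f₁ g)]
  -- RHS
  have convT : ∀ k, G.d k = x →
      G.conv f₁ f₂ k = ∑ h ∈ T₂, f₁ (G.mul k (G.inv h)) * f₂ h := by
    intro k ek
    rw [conv, finsum_mem_def, finsum_eq_finset_sum_of_support_subset
      (fun h => Set.indicator {h | G.d h = G.d k}
        (fun h => f₁ (G.mul k (G.inv h)) * f₂ h) h) (s := T₂) ?_]
    · refine Finset.sum_congr rfl fun h hh => ?_
      exact Set.indicator_of_mem (show h ∈ {h' | G.d h' = G.d k} by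
        rw [Set.mem_setOf_eq, ek, (memT₂.1 hh).1]) _
    · intro h hh
      rw [Function.mem_support] at hh
      by_cases hd : G.d h = G.d k
      · rw [Set.indicator_of_mem (show h ∈ {h' | G.d h' = G.d k} from hd)] at hh
        refine Finset.mem_coe.2 (memT₂.2 ⟨hd.trans ek, fun h0 => hh ?_⟩)
        rw [h0, mul_zero]
      · exact absurd (Set.indicator_of_notMem
          (show h ∉ {h' | G.d h' = G.d k} from hd) _) hh
  have RHS : F.actSec s (G.conv f₁ f₂) x =
      ∑ h ∈ T₂, ∑ k ∈ T₃, (f₁ (G.mul k (G.inv h)) * f₂ h) • F.Wf s x k := by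
    rw [F.actSec_eq, finsum_eq_finset_sum_of_support_subset _ (s := T₃) ?_]
    · rw [Finset.sum_comm]
      refine Finset.sum_congr rfl fun k hk => ?_
      rw [convT k (memT₃ hk), Finset.sum_smul]
    · intro k hk
      rw [Function.mem_support] at hk
      have ek : G.d k = x := by
        by_contra h
        exact hk (by rw [F.Wf_of_nfiber s h, smul_zero])
      have hconv : G.conv f₁ f₂ k ≠ 0 := fun h => hk (by rw [h, zero_smul])
      have : ∃ h, G.d h = G.d k ∧ f₁ (G.mul k (G.inv h)) * f₂ h ≠ 0 := by
        by_contra hno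
        push_neg at hno
        refine hconv ?_
        rw [conv, finsum_mem_def]
        refine finsum_eq_zero_of_forall_eq_zero fun h => ?_
        by_cases hd : G.d h = G.d k
        · rw [Set.indicator_of_mem (show h ∈ {h' | G.d h' = G.d k} from hd)]
          exact hno h hd
        · exact Set.indicator_of_notMem (show h ∉ {h' | G.d h' = G.d k} from hd) _
      obtain ⟨h, hd, hne⟩ := this
      have hf2 : f₂ h ≠ 0 := fun h0 => hne (by rw [h0, mul_zero])
      have hf1 : f₁ (G.mul k (G.inv h)) ≠ 0 := fun h0 => hne (by rw [h0, zero_mul])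
      have hhT₂ : h ∈ T₂ := memT₂.2 ⟨hd.trans ek, hf2⟩
      obtain ⟨hdg, hmul⟩ := fact1 h (hd.trans ek) k ek
      refine Finset.mem_coe.2 (Finset.mem_biUnion.2 ⟨h, hhT₂,
        Finset.mem_image.2 ⟨G.mul k (G.inv h), memT₁.2 ⟨hdg, hf1⟩, hmul⟩⟩)
  rw [LHS, RHS]
  refine Finset.sum_congr rfl fun h hh => ?_
  obtain ⟨eh, hf2⟩ := memT₂.1 hh
  have himg : (T₁ h).image (fun g => G.mul g h) ⊆ T₃ :=
    Finset.subset_biUnion_of_mem (fun h => (T₁ h).image (fun g => G.mul g h)) hh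
  rw [← Finset.sum_subset himg ?_]
  · rw [Finset.sum_image ?_]
    · refine Finset.sum_congr rfl fun g hg => ?_
      rw [(fact2 h eh g (memT₁.1 hg).1).2]
    · intro g hg g' hg' hee
      have e1 := (fact2 h eh g (memT₁.1 hg).1).2
      have e2 := (fact2 h eh g' (memT₁.1 hg').1).2
      rw [← e1, ← e2, show G.mul g h = G.mul g' h from hee]
  · intro k hkT₃ hkimg
    have ek := memT₃ hkT₃
    by_contra hne
    have hf1 : f₁ (G.mul k (G.inv h)) ≠ 0 := by
      intro h0
      exact hne (by rw [h0, zero_mul, zero_smul])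
    obtain ⟨hdg, hmul⟩ := fact1 h eh k ek
    exact hkimg (Finset.mem_image.2 ⟨G.mul k (G.inv h), memT₁.2 ⟨hdg, hf1⟩, hmul⟩)

end GSheafMod
namespace GSheafMod

open TopGroupoid

variable {Γ : Type} [TopologicalSpace Γ] {G : TopGroupoid Γ}
  {𝕜 : Type} [CommRing 𝕜] (F : GSheafMod G 𝕜)

lemma unitary (hG : G.Ample) {s : ∀ x, F.stalk x} (hs : s ∈ F.Γc) :
    ∃ U : Set Γ, U ⊆ G.units ∧ IsOpen U ∧ IsCompact U ∧
      F.actSec s (chi 𝕜 U) = s := by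
  obtain ⟨-, -, K, hK, hKs⟩ := hs
  set K₁ : Set Γ := G.d '' K with hK₁
  have hK₁c : IsCompact K₁ := hK.image G.continuous_d
  have hK₁u : K₁ ⊆ G.units := by rintro y ⟨g, -, rfl⟩; exact G.d_mem_units g
  have hbasis : ∀ y : Γ, y ∈ K₁ → ∃ C : Set Γ, C ⊆ G.units ∧ y ∈ C ∧
      IsOpen C ∧ IsCompact C := by
    intro y hy
    obtain ⟨C, hCu, hyC, hCsub, hCo, hCc⟩ := hG.2.2 y (hK₁u hy) G.units
      (G.units_isOpen hG.1) (hK₁u hy)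
    exact ⟨C, hCu, hyC, hCo, hCc⟩
  choose C hCu hyC hCo hCc using hbasis
  obtain ⟨t, ht⟩ := hK₁c.elim_finite_subcover (fun y : K₁ => C y.1 y.2)
    (fun y => hCo y.1 y.2) (fun y hy => Set.mem_iUnion.2 ⟨⟨y, hy⟩, hyC y hy⟩)
  refine ⟨⋃ y ∈ t, C y.1 y.2, ?_, ?_, ?_, ?_⟩
  · exact Set.iUnion₂_subset fun y _ => hCu y.1 y.2
  · exact isOpen_biUnion fun y _ => hCo y.1 y.2
  · exact t.finite_toSet.isCompact_biUnion fun y _ => hCc y.1 y.2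
  · funext x
    set U : Set Γ := ⋃ y ∈ t, C y.1 y.2 with hU
    have hUu : U ⊆ G.units := Set.iUnion₂_subset fun y _ => hCu y.1 y.2
    by_cases hxU : x ∈ U
    · exact F.actSec_chi_unit_mem s hUu hxU
    · rw [F.actSec_chi_unit_not_mem s hUu hxU]
      by_cases hxu : x ∈ G.units
      · by_contra hne
        have hsx : s x ≠ 0 := fun h => hne h.symm
        have hxK : x ∈ K := hKs x hsx
        have hxK₁ : x ∈ K₁ := ⟨x, hxK, G.d_eq_self hxu⟩
        obtain ⟨y, hyt, hxC⟩ := Set.mem_iUnion₂.1 (ht hxK₁)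
        exact hxU (Set.mem_biUnion hyt hxC)
      · exact (F.eq_zero_off_units hxu (s x)).symm

end GSheafMod
open TopGroupoid in
/-- For a `𝒢`-sheaf of `𝕜`-modules `(E,p)` over an ample groupoid,
the compactly supported continuous global sections `Γ_c(E,p)`, with pointwise
addition and the action `(s·f)(x) = Σ_{d(g)=x} f(g)•(s(r(g))·g)`, form a unitary
right `𝕜𝒢`-module. -/
theorem sections_form_unitary_module {Γ : Type} [TopologicalSpace Γ]
    (G : TopGroupoid Γ) (hG : G.Ample) (𝕜 : Type) [CommRing 𝕜]
    (F : GSheafMod G 𝕜) :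
    -- the action preserves compactly supported continuous sections
    (∀ s ∈ F.Γc, ∀ f ∈ G.grpAlg 𝕜, F.actSec s f ∈ F.Γc) ∧
    -- Γ_c is closed under pointwise addition and the action is biadditive
    (∀ s ∈ F.Γc, ∀ t ∈ F.Γc, s + t ∈ F.Γc ∧
      ∀ f ∈ G.grpAlg 𝕜, F.actSec (s + t) f = F.actSec s f + F.actSec t f) ∧
    (∀ s ∈ F.Γc, ∀ f₁ ∈ G.grpAlg 𝕜, ∀ f₂ ∈ G.grpAlg 𝕜,
      F.actSec s (f₁ + f₂) = F.actSec s f₁ + F.actSec s f₂) ∧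
    -- 𝕜-bilinearity
    (∀ (c : 𝕜), ∀ s ∈ F.Γc, ∀ f ∈ G.grpAlg 𝕜,
      F.actSec s (c • f) = c • F.actSec s f ∧
      F.actSec (c • s) f = c • F.actSec s f) ∧
    -- associativity with respect to convolution
    (∀ s ∈ F.Γc, ∀ f₁ ∈ G.grpAlg 𝕜, ∀ f₂ ∈ G.grpAlg 𝕜,
      F.actSec (F.actSec s f₁) f₂ = F.actSec s (G.conv f₁ f₂)) ∧
    -- the module is unitary
    (∀ s ∈ F.Γc, ∃ U : Set Γ, U ⊆ G.units ∧ IsOpen U ∧ IsCompact U ∧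
      F.actSec s (chi 𝕜 U) = s) := by
  obtain ⟨hE, hsep, hbasis⟩ := hG
  have hGA : G.Ample := ⟨hE, hsep, hbasis⟩
  refine ⟨?_, ?_, ?_, ?_, ?_, ?_⟩
  · -- preservation of Γc
    intro s hs f hf
    obtain ⟨n, c, U, hbis, hcpt, rfl⟩ := TopGroupoid.grpAlg_rep hf
    rw [F.actSec_sum_left _ _ (fun i _ =>
      (TopGroupoid.fibFin_chi (hbis i)).smul (c i)) s]
    refine F.Γc_sum _ _ fun i _ => ?_
    rw [F.actSec_smul_left (TopGroupoid.fibFin_chi (hbis i)) (c i) s]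
    exact F.Γc_smul (c i) (F.Γc_actSec_chi hGA hs (hbis i) (hcpt i))
  · -- additivity in the section
    intro s hs t ht
    exact ⟨F.Γc_add hs ht, fun f hf =>
      F.actSec_add_right (TopGroupoid.grpAlg_fibFin hf) s t⟩
  · -- additivity in the algebra element
    intro s _ f₁ hf₁ f₂ hf₂
    exact F.actSec_add_left (TopGroupoid.grpAlg_fibFin hf₁)
      (TopGroupoid.grpAlg_fibFin hf₂) s
  · -- 𝕜-bilinearity
    intro c s _ f hf
    exact ⟨F.actSec_smul_left (TopGroupoid.grpAlg_fibFin hf) c s,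
      F.actSec_smul_right (TopGroupoid.grpAlg_fibFin hf) c s⟩
  · -- associativity
    intro s _ f₁ hf₁ f₂ hf₂
    exact F.actSec_conv (TopGroupoid.grpAlg_fibFin hf₁)
      (TopGroupoid.grpAlg_fibFin hf₂) s
  · -- unitarity
    intro s hs
    exact F.unitary hGA hs
end

section
/- Let 𝒢 be an ample groupoid, M a unitary right 𝕜𝒢-module, and 0 ≠ m ∈ M. Then there exists a point x of the unit space such that mχ_W ≠ 0 for every compact open neighborhood W of x; equivalently, the germ [m]_x in the stalk M_x is nonzero. Hence the map m ↦ ([m]_x)_{x ∈ 𝒢⁽⁰⁾} is injective. -/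
open Set

/-- Germ equality at `x`: two module elements have the same image in the stalk
`M_x = colim_{x ∈ W} Mχ_W` (the colimit over compact open neighbourhoods `W` of
`x` in the unit space, with restriction maps `m ↦ mχ_W`). -/
def germEq {Γ : Type} [TopologicalSpace Γ] (G : TopGroupoid Γ) (𝕜 : Type)
    [CommRing 𝕜] {M : Type} (act : M → (Γ → 𝕜) → M) (x : Γ) (a b : M) : Prop :=
  ∃ W : Set Γ, W ⊆ G.units ∧ IsOpen W ∧ IsCompact W ∧ x ∈ W ∧
    act a (TopGroupoid.chi 𝕜 W) = act b (TopGroupoid.chi 𝕜 W)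


namespace TopGroupoid

variable {Γ : Type} [TopologicalSpace Γ] (G : TopGroupoid Γ)

lemma d_unit {w : Γ} (hw : w ∈ G.units) : G.d w = w := by
  obtain ⟨k, rfl⟩ := hw
  have h := G.d_mul k (G.d k) (G.r_d k).symm
  rw [G.mul_d] at h
  exact h.symm

lemma r_unit {w : Γ} (hw : w ∈ G.units) : G.r w = w := by
  obtain ⟨k, rfl⟩ := hw
  exact G.r_d k

lemma inv_unit {w : Γ} (hw : w ∈ G.units) : G.inv w = w := by
  have h1 := G.mul_d (G.inv w)
  rw [G.d_inv, G.r_unit hw] at h1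
  have h2 := G.inv_mul w
  rw [G.d_unit hw] at h2
  rw [← h1, h2]

/-- Convolution of characteristic functions of subsets of the unit space. -/
lemma conv_chi_chi {𝕜 : Type} [CommRing 𝕜] {V W : Set Γ}
    (hV : V ⊆ G.units) (hW : W ⊆ G.units) :
    G.conv (chi 𝕜 V) (chi 𝕜 W) = chi 𝕜 (V ∩ W) := by
  funext g
  have hdd : G.d (G.d g) = G.d g := G.d_unit (G.d_mem_units g)
  have hkey : G.conv (chi 𝕜 V) (chi 𝕜 W) g
      = chi 𝕜 V g * chi 𝕜 W (G.d g) := by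
    unfold conv
    have hset : {h : Γ | G.d h = G.d g} ∩
        Function.support (fun h => chi 𝕜 V (G.mul g (G.inv h)) * chi 𝕜 W h)
        = ({G.d g} : Set Γ) ∩
          Function.support (fun h => chi 𝕜 V (G.mul g (G.inv h)) * chi 𝕜 W h) := by
      apply Set.eq_of_subset_of_subset
      · rintro h ⟨hh1, hh2⟩
        refine ⟨?_, hh2⟩
        have hWh : h ∈ W := by
          by_contra hc
          apply hh2
          simp only [chi, Set.indicator_of_notMem hc, mul_zero]
        have : G.d h = h := G.d_unit (hW hWh)
        simp only [Set.mem_singleton_iff]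
        rw [← this]; exact hh1
      · rintro h ⟨hh1, hh2⟩
        refine ⟨?_, hh2⟩
        rw [Set.mem_singleton_iff] at hh1
        subst hh1
        exact hdd
    rw [finsum_mem_inter_support_eq _ _ _ hset, finsum_mem_singleton]
    have : G.mul g (G.inv (G.d g)) = g := by
      rw [G.inv_unit (G.d_mem_units g), G.mul_d]
    rw [this]
  rw [hkey]
  by_cases hgV : g ∈ V
  · have hdg : G.d g = g := G.d_unit (hV hgV)
    rw [hdg]
    by_cases hgW : g ∈ W
    · simp [chi, Set.indicator_apply, hgV, hgW]
    · simp [chi, Set.indicator_apply, hgV, hgW]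
  · have hgVW : g ∉ V ∩ W := fun h => hgV h.1
    simp [chi, Set.indicator_apply, hgV, hgVW]

/-- The characteristic function of a compact open subset of the unit space
belongs to the groupoid algebra. -/
lemma chi_mem_grpAlg (𝕜 : Type) [CommRing 𝕜] {W : Set Γ} (hWu : W ⊆ G.units)
    (hWo : IsOpen W) (hWc : IsCompact W) : chi 𝕜 W ∈ G.grpAlg 𝕜 := by
  apply Submodule.subset_span
  refine ⟨W, ⟨hWo, ?_, ?_⟩, hWc, rfl⟩
  · have hid : ∀ v ∈ W, G.d v = v := fun v hv => G.d_unit (hWu hv)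
    have himg : ∀ V : Set Γ, V ⊆ W → G.d '' V = V := by
      intro V hVW
      rw [Set.image_congr (fun v hv => hid v (hVW hv)), Set.image_id']
    refine ⟨fun a ha b hb h => by rwa [hid a ha, hid b hb] at h, ?_, ?_⟩
    · rw [himg W subset_rfl]; exact hWo
    · intro V hVW hVo; rw [himg V hVW]; exact hVo
  · have hid : ∀ v ∈ W, G.r v = v := fun v hv => G.r_unit (hWu hv)
    have himg : ∀ V : Set Γ, V ⊆ W → G.r '' V = V := by
      intro V hVW
      rw [Set.image_congr (fun v hv => hid v (hVW hv)), Set.image_id']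
    refine ⟨fun a ha b hb h => by rwa [hid a ha, hid b hb] at h, ?_, ?_⟩
    · rw [himg W subset_rfl]; exact hWo
    · intro V hVW hVo; rw [himg V hVW]; exact hVo

/-- Intersection of compact subsets of the (Hausdorff) unit space is compact. -/
lemma inter_isCompact (hG : G.Ample) {K L : Set Γ} (hKu : K ⊆ G.units)
    (hLu : L ⊆ G.units) (hKc : IsCompact K) (hLc : IsCompact L) :
    IsCompact (K ∩ L) := by
  haveI : T2Space ↥G.units := by
    constructor
    intro x y hxy
    obtain ⟨U, V, hUo, hVo, hxU, hyV, hUV⟩ :=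
      hG.2.1 x.1 y.1 x.2 y.2 (fun h => hxy (Subtype.ext h))
    refine ⟨Subtype.val ⁻¹' U, Subtype.val ⁻¹' V,
      hUo.preimage continuous_subtype_val, hVo.preimage continuous_subtype_val,
      hxU, hyV, ?_⟩
    rw [Set.disjoint_left]
    intro z hz1 hz2
    have : z.1 ∈ U ∩ V ∩ G.units := ⟨⟨hz1, hz2⟩, z.2⟩
    rw [hUV] at this
    exact this
  have himK : Subtype.val '' (Subtype.val ⁻¹' K : Set ↥G.units) = K := by
    rw [Set.image_preimage_eq_inter_range, Subtype.range_coe]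
    exact Set.inter_eq_self_of_subset_left hKu
  have himL : Subtype.val '' (Subtype.val ⁻¹' L : Set ↥G.units) = L := by
    rw [Set.image_preimage_eq_inter_range, Subtype.range_coe]
    exact Set.inter_eq_self_of_subset_left hLu
  have hK' : IsCompact (Subtype.val ⁻¹' K : Set ↥G.units) := by
    rw [Subtype.isCompact_iff, himK]; exact hKc
  have hL' : IsCompact (Subtype.val ⁻¹' L : Set ↥G.units) := by
    rw [Subtype.isCompact_iff, himL]; exact hLc
  have hcomp := (hK'.inter hL').image continuous_subtype_val
  have heq : Subtype.val '' ((Subtype.val ⁻¹' K) ∩ (Subtype.val ⁻¹' L) : Set ↥G.units)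
      = K ∩ L := by
    rw [← Set.preimage_inter, Set.image_preimage_eq_inter_range, Subtype.range_coe]
    exact Set.inter_eq_self_of_subset_left (fun z hz => hKu hz.1)
  rwa [heq] at hcomp

/-- Inclusion–exclusion identity for characteristic functions. -/
lemma chi_union_add_chi_inter (𝕜 : Type) [CommRing 𝕜] (A B : Set Γ) :
    chi (Γ := Γ) 𝕜 (A ∪ B) + chi 𝕜 (A ∩ B) = chi 𝕜 A + chi 𝕜 B := by
  funext g
  by_cases hA : g ∈ A <;> by_cases hB : g ∈ B <;>
    simp [chi, Set.indicator_apply, hA, hB]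

end TopGroupoid

open TopGroupoid in
/-- If `m ≠ 0` in a unitary right `𝕜𝒢`-module `M` over an ample
groupoid, then there is a point `x` of the unit space such that `mχ_W ≠ 0` for
every compact open neighbourhood `W` of `x`, i.e. the germ `[m]_x` is nonzero;
hence `m ↦ ([m]_x)_x` is injective. -/
theorem exists_nonzero_germ {Γ : Type} [TopologicalSpace Γ]
    (G : TopGroupoid Γ) (hG : G.Ample) (𝕜 : Type) [CommRing 𝕜]
    (M : Type) [AddCommGroup M] [Module 𝕜 M] (act : M → (Γ → 𝕜) → M)
    (act_addm : ∀ m n f, act (m + n) f = act m f + act n f)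
    (act_addf : ∀ m f₁ f₂, f₁ ∈ G.grpAlg 𝕜 → f₂ ∈ G.grpAlg 𝕜 →
      act m (f₁ + f₂) = act m f₁ + act m f₂)
    (act_smulm : ∀ (c : 𝕜) m f, act (c • m) f = c • act m f)
    (act_smulf : ∀ (c : 𝕜) m f, f ∈ G.grpAlg 𝕜 → act m (c • f) = c • act m f)
    (act_conv : ∀ m f₁ f₂, f₁ ∈ G.grpAlg 𝕜 → f₂ ∈ G.grpAlg 𝕜 →
      act (act m f₁) f₂ = act m (G.conv f₁ f₂))
    (hunit : ∀ m : M, ∃ U : Set Γ, U ⊆ G.units ∧ IsOpen U ∧ IsCompact U ∧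
      act m (chi 𝕜 U) = m)
    (m : M) (hm : m ≠ 0) :
    (∃ x ∈ G.units, (∀ W : Set Γ, W ⊆ G.units → IsOpen W → IsCompact W →
      x ∈ W → act m (chi 𝕜 W) ≠ 0) ∧ ¬ germEq G 𝕜 act x m 0) ∧
    -- hence m ↦ ([m]_x)_x is injective
    (∀ n n' : M, n ≠ n' → ∃ x ∈ G.units, ¬ germEq G 𝕜 act x n n') := by
  classical
  -- basic consequences of the module axioms
  have act_zerom : ∀ f, act (0 : M) f = 0 := by
    intro f
    have h := act_addm 0 0 f
    rw [add_zero] at h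
    exact (left_eq_add.mp h)
  have act_subm : ∀ (a b : M) f, act (a - b) f = act a f - act b f := by
    intro a b f
    have h := act_addm (a - b) b f
    rw [sub_add_cancel] at h
    rw [eq_sub_iff_add_eq]
    exact h.symm
  -- the key statement, for an arbitrary nonzero element
  have key : ∀ p : M, p ≠ 0 → ∃ x ∈ G.units,
      ∀ W : Set Γ, W ⊆ G.units → IsOpen W → IsCompact W → x ∈ W →
        act p (chi 𝕜 W) ≠ 0 := by
    intro p hp
    obtain ⟨U, hUu, hUo, hUc, hUp⟩ := hunit p
    by_contra hcon
    push_neg at hcon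
    -- for every x ∈ U choose a compact open neighbourhood killing p,
    -- and intersect it with U
    have hchoice : ∀ x ∈ U, ∃ V : Set Γ, V ⊆ U ∧ IsOpen V ∧ IsCompact V ∧
        x ∈ V ∧ act p (chi 𝕜 V) = 0 := by
      intro x hxU
      obtain ⟨W, hWu, hWo, hWc, hxW, hW0⟩ := hcon x (hUu hxU)
      refine ⟨W ∩ U, Set.inter_subset_right, hWo.inter hUo,
        G.inter_isCompact hG hWu hUu hWc hUc, ⟨hxW, hxU⟩, ?_⟩
      rw [← G.conv_chi_chi hWu hUu,
        ← act_conv p _ _ (G.chi_mem_grpAlg 𝕜 hWu hWo hWc)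
          (G.chi_mem_grpAlg 𝕜 hUu hUo hUc), hW0, act_zerom]
    choose! V hVU hVo hVc hxV hV0 using hchoice
    -- finitely many of the V x cover U
    obtain ⟨t, htU, hcover⟩ := hUc.elim_nhds_subcover V
      (fun x hx => (hVo x hx).mem_nhds (hxV x hx))
    -- the union of finitely many killing sets is a killing set
    have hzero : ∀ s : Finset Γ, (∀ x ∈ s, x ∈ U) →
        act p (chi 𝕜 (⋃ x ∈ s, V x)) = 0 := by
      intro s
      induction s using Finset.induction_on with
      | empty =>
        intro _
        simp only [Finset.notMem_empty, Set.iUnion_of_empty, Set.iUnion_empty]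
        have h := act_addf p 0 0 (Submodule.zero_mem _) (Submodule.zero_mem _)
        rw [add_zero] at h
        have h0 : act p (0 : Γ → 𝕜) = 0 := left_eq_add.mp h
        rw [show chi 𝕜 (∅ : Set Γ) = (0 : Γ → 𝕜) from Set.indicator_empty _]
        exact h0
      | insert a s₀ hnotmem ih =>
        intro hmem
        have haU : a ∈ U := hmem a (Finset.mem_insert_self a s₀)
        have hs₀U : ∀ x ∈ s₀, x ∈ U := fun x hx =>
          hmem x (Finset.mem_insert_of_mem hx)
        set A := V a with hA
        set B := ⋃ x ∈ s₀, V x with hB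
        have hAu : A ⊆ G.units := (hVU a haU).trans hUu
        have hAo : IsOpen A := hVo a haU
        have hAc : IsCompact A := hVc a haU
        have hBu : B ⊆ G.units := by
          apply Set.iUnion₂_subset
          intro x hx
          exact (hVU x (hs₀U x hx)).trans hUu
        have hBo : IsOpen B := isOpen_biUnion fun x hx => hVo x (hs₀U x hx)
        have hBc : IsCompact B :=
          s₀.finite_toSet.isCompact_biUnion fun x hx => hVc x (hs₀U x hx)
        have hA0 : act p (chi 𝕜 A) = 0 := hV0 a haU
        have hB0 : act p (chi 𝕜 B) = 0 := ih hs₀U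
        have hAB0 : act p (chi 𝕜 (A ∩ B)) = 0 := by
          rw [← G.conv_chi_chi hAu hBu,
            ← act_conv p _ _ (G.chi_mem_grpAlg 𝕜 hAu hAo hAc)
              (G.chi_mem_grpAlg 𝕜 hBu hBo hBc), hA0, act_zerom]
        have hUnion : (⋃ x ∈ insert a s₀, V x) = A ∪ B :=
          Finset.set_biUnion_insert a s₀ V
        rw [hUnion]
        have hABu : A ∪ B ⊆ G.units := Set.union_subset hAu hBu
        have hABo : IsOpen (A ∪ B) := hAo.union hBo
        have hABc : IsCompact (A ∪ B) := hAc.union hBc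
        have hIu : A ∩ B ⊆ G.units := fun z hz => hAu hz.1
        have hIo : IsOpen (A ∩ B) := hAo.inter hBo
        have hIc : IsCompact (A ∩ B) := G.inter_isCompact hG hAu hBu hAc hBc
        have hsum : act p (chi 𝕜 (A ∪ B) + chi 𝕜 (A ∩ B))
            = act p (chi 𝕜 A + chi 𝕜 B) := by
          rw [chi_union_add_chi_inter]
        rw [act_addf p _ _ (G.chi_mem_grpAlg 𝕜 hABu hABo hABc)
            (G.chi_mem_grpAlg 𝕜 hIu hIo hIc),
          act_addf p _ _ (G.chi_mem_grpAlg 𝕜 hAu hAo hAc)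
            (G.chi_mem_grpAlg 𝕜 hBu hBo hBc), hA0, hB0, hAB0, add_zero,
          add_zero] at hsum
        exact hsum
    have hV0' := hzero t htU
    -- but the union contains U, so p = 0
    set Vt := ⋃ x ∈ t, V x with hVt
    have hVtu : Vt ⊆ G.units := by
      apply Set.iUnion₂_subset
      intro x hx
      exact (hVU x (htU x hx)).trans hUu
    have hVto : IsOpen Vt := isOpen_biUnion fun x hx => hVo x (htU x hx)
    have hVtc : IsCompact Vt :=
      t.finite_toSet.isCompact_biUnion fun x hx => hVc x (htU x hx)
    have hVtU : Vt ∩ U = U := Set.inter_eq_self_of_subset_right hcover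
    apply hp
    calc p = act p (chi 𝕜 U) := hUp.symm
      _ = act p (chi 𝕜 (Vt ∩ U)) := by rw [hVtU]
      _ = act p (G.conv (chi 𝕜 Vt) (chi 𝕜 U)) := by
          rw [G.conv_chi_chi hVtu hUu]
      _ = act (act p (chi 𝕜 Vt)) (chi 𝕜 U) :=
          (act_conv p _ _ (G.chi_mem_grpAlg 𝕜 hVtu hVto hVtc)
            (G.chi_mem_grpAlg 𝕜 hUu hUo hUc)).symm
      _ = act 0 (chi 𝕜 U) := by rw [hV0']
      _ = 0 := act_zerom _
  obtain ⟨x, hxu, hx⟩ := key m hm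
  constructor
  · refine ⟨x, hxu, hx, ?_⟩
    rintro ⟨W, hWu, hWo, hWc, hxW, heq⟩
    rw [act_zerom] at heq
    exact hx W hWu hWo hWc hxW heq
  · intro n n' hnn'
    obtain ⟨y, hyu, hy⟩ := key (n - n') (sub_ne_zero_of_ne hnn')
    refine ⟨y, hyu, ?_⟩
    rintro ⟨W, hWu, hWo, hWc, hyW, heq⟩
    apply hy W hWu hWo hWc hyW
    rw [act_subm, heq, sub_self]
end
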